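/- Variance vanishing for i.i.d. majority voting: let p_1, p_2, … be i.i.d. random variables in [0,1] with mean μ ≠ 1/2 and variance σ² satisfying μ(1−μ) − σ² > 0 and σ² + μ² ≠ 1/2, and let q_ℓ = Σ_{k=⌊ℓ/2⌋+1}^{ℓ} Σ_{I⊆{1,…,ℓ},|I|=k} ∏_{i∈I} p_i ∏_{j∉I}(1−p_j). Then Var(q_ℓ) → 0 as ℓ → ∞. -/

import Mathlib

open Finset Filter MeasureTheory ProbabilityTheory

/-- Majority-voting ensemble accuracy of independent binary classifiers indexed by `L`
with individual accuracies `p i`. -/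
noncomputable def majAcc {ι : Type*} [DecidableEq ι] (L : Finset ι) (p : ι → ℝ) : ℝ :=
  ∑ k ∈ Finset.Icc (L.card / 2 + 1) L.card,
    ∑ I ∈ Finset.powersetCard k L, (∏ i ∈ I, p i) * ∏ j ∈ L \ I, (1 - p j)

private lemma bsum0 (x : ℝ) (n : ℕ) :
    ∑ k ∈ range (n+1), x ^ k * (1-x) ^ (n-k) * (n.choose k : ℝ) = 1 := by
  rw [← add_pow]
  norm_num

private lemma choose_key (n k : ℕ) :
    ((k:ℝ)+1) * ((n+1).choose (k+1) : ℝ) = ((n:ℝ)+1) * (n.choose k : ℝ) := by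
  have h : ((k+1) * ((n+1).choose (k+1)) : ℕ) = (n+1) * n.choose k := by
    rw [mul_comm]
    exact (Nat.add_one_mul_choose_eq n k).symm
  exact_mod_cast h

private lemma bsum1 (x : ℝ) (n : ℕ) :
    ∑ k ∈ range (n+1), (k:ℝ) * (x ^ k * (1-x) ^ (n-k) * (n.choose k : ℝ)) = n * x := by
  induction n with
  | zero => simp
  | succ n _ =>
    rw [Finset.sum_range_succ']
    simp only [Nat.cast_zero, zero_mul, add_zero, Nat.succ_sub_succ, Nat.cast_add, Nat.cast_one]
    have : ∀ k ∈ range (n+1), ((k:ℝ)+1) * (x ^ (k+1) * (1-x) ^ (n-k) * ((n+1).choose (k+1) : ℝ))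
        = ((n:ℝ)+1) * x * (x ^ k * (1-x) ^ (n-k) * (n.choose k : ℝ)) := by
      intro k _
      have h := choose_key n k
      rw [pow_succ]
      linear_combination (x^k * x * (1-x)^(n-k)) * h
    rw [Finset.sum_congr rfl this, ← Finset.mul_sum, bsum0]
    ring

private lemma bsum2 (x : ℝ) (n : ℕ) :
    ∑ k ∈ range (n+1), (k:ℝ) * ((k:ℝ)-1) * (x ^ k * (1-x) ^ (n-k) * (n.choose k : ℝ))
      = n * ((n:ℝ)-1) * x^2 := by
  induction n with
  | zero => simp
  | succ n _ =>
    rw [Finset.sum_range_succ']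
    simp only [Nat.cast_zero, zero_mul, add_zero, Nat.succ_sub_succ, Nat.cast_add, Nat.cast_one]
    have : ∀ k ∈ range (n+1),
        ((k:ℝ)+1) * (((k:ℝ)+1)-1) * (x ^ (k+1) * (1-x) ^ (n-k) * ((n+1).choose (k+1) : ℝ))
        = ((n:ℝ)+1) * x * ((k:ℝ) * (x ^ k * (1-x) ^ (n-k) * (n.choose k : ℝ))) := by
      intro k _
      have h := choose_key n k
      rw [pow_succ]
      linear_combination ((k:ℝ) * x^k * x * (1-x)^(n-k)) * h
    rw [Finset.sum_congr rfl this, ← Finset.mul_sum, bsum1]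
    ring

private lemma bmoment (x : ℝ) (n : ℕ) :
    ∑ k ∈ range (n+1), ((k:ℝ) - n*x)^2 * (x ^ k * (1-x) ^ (n-k) * (n.choose k : ℝ))
      = n * x * (1-x) := by
  have e : ∀ k ∈ range (n+1), ((k:ℝ) - n*x)^2 * (x ^ k * (1-x) ^ (n-k) * (n.choose k : ℝ))
      = (k:ℝ) * ((k:ℝ)-1) * (x ^ k * (1-x) ^ (n-k) * (n.choose k : ℝ))
        + (1 - 2*(n:ℝ)*x) * ((k:ℝ) * (x ^ k * (1-x) ^ (n-k) * (n.choose k : ℝ)))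
        + ((n:ℝ)*x)^2 * (x ^ k * (1-x) ^ (n-k) * (n.choose k : ℝ)) := by
    intro k _; ring
  rw [Finset.sum_congr rfl e, Finset.sum_add_distrib, Finset.sum_add_distrib,
    ← Finset.mul_sum, ← Finset.mul_sum, bsum0, bsum1, bsum2]
  ring

private lemma bterm_nonneg {x : ℝ} (hx0 : 0 ≤ x) (hx1 : x ≤ 1) (n k : ℕ) :
    0 ≤ x ^ k * (1-x) ^ (n-k) * (n.choose k : ℝ) := by
  have h1 : (0:ℝ) ≤ 1 - x := by linarith
  positivity

private lemma chebyshev_aux {x : ℝ} (hx0 : 0 ≤ x) (hx1 : x ≤ 1) (hx : x ≠ 1/2) {n : ℕ}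
    (hn : 1 ≤ n) (s : Finset ℕ) (hs : s ⊆ range (n+1))
    (hfar : ∀ k ∈ s, ((n:ℝ) * (x - 1/2))^2 ≤ ((k:ℝ) - n*x)^2) :
    ∑ k ∈ s, x ^ k * (1-x) ^ (n-k) * (n.choose k : ℝ)
      ≤ (x * (1-x) / (x-1/2)^2) / n := by
  set B : ℕ → ℝ := fun k => x ^ k * (1-x) ^ (n-k) * (n.choose k : ℝ) with hB
  have key : ((n:ℝ) * (x - 1/2))^2 * ∑ k ∈ s, B k ≤ (n:ℝ) * x * (1-x) := by
    calc ((n:ℝ) * (x - 1/2))^2 * ∑ k ∈ s, B k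
        = ∑ k ∈ s, ((n:ℝ) * (x - 1/2))^2 * B k := Finset.mul_sum _ _ _
      _ ≤ ∑ k ∈ s, ((k:ℝ) - n*x)^2 * B k := by
          refine Finset.sum_le_sum fun k hk => ?_
          exact mul_le_mul_of_nonneg_right (hfar k hk) (bterm_nonneg hx0 hx1 n k)
      _ ≤ ∑ k ∈ range (n+1), ((k:ℝ) - n*x)^2 * B k := by
          refine Finset.sum_le_sum_of_subset_of_nonneg hs fun k _ _ => ?_
          exact mul_nonneg (sq_nonneg _) (bterm_nonneg hx0 hx1 n k)
      _ = (n:ℝ) * x * (1-x) := bmoment x n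
  have hnpos : (0:ℝ) < n := by exact_mod_cast hn
  have hne : x - 1/2 ≠ 0 := sub_ne_zero.mpr hx
  have hd : (0:ℝ) < (x - 1/2)^2 := by positivity
  have h2 : ∑ k ∈ s, B k ≤ (n:ℝ) * x * (1-x) / ((n:ℝ) * (x - 1/2))^2 := by
    rw [le_div_iff₀ (by positivity)]
    linarith [key]
  calc ∑ k ∈ s, B k ≤ (n:ℝ) * x * (1-x) / ((n:ℝ) * (x - 1/2))^2 := h2
    _ = (x * (1-x) / (x-1/2)^2) / n := by
        rw [mul_pow, div_div]
        rw [div_eq_div_iff (by positivity) (by positivity)]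
        ring

section ProbAux

variable {Ω : Type*} [MeasurableSpace Ω] {μ : Measure Ω} [IsProbabilityMeasure μ]

private lemma integrable_prod_of_indep {X : ℕ → Ω → ℝ}
    (hind : iIndepFun X μ) (hXm : ∀ i, Measurable (X i))
    (hXi : ∀ i, Integrable (X i) μ) (s : Finset ℕ) :
    Integrable (fun ω => ∏ i ∈ s, X i ω) μ := by
  classical
  induction s using Finset.cons_induction with
  | empty => simpa using integrable_const (1:ℝ)
  | cons a s ha ih =>
    have hab : (∏ j ∈ s, X j) = fun ω => ∏ j ∈ s, X j ω := by
      funext ω; simp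
    have hIdF : IndepFun (X a) (fun ω => ∏ i ∈ s, X i ω) μ := by
      have h := (hind.indepFun_finsetProd_of_notMem hXm ha).symm
      rwa [hab] at h
    have h := hIdF.integrable_mul (hXi a) ih
    have heq : (fun ω => ∏ i ∈ Finset.cons a s ha, X i ω)
        = (X a * fun ω => ∏ i ∈ s, X i ω) := by
      funext ω; simp only [Finset.prod_cons, Pi.mul_apply]
    rwa [heq]

private lemma integral_prod_of_indep {X : ℕ → Ω → ℝ}
    (hind : iIndepFun X μ) (hXm : ∀ i, Measurable (X i))
    (hXi : ∀ i, Integrable (X i) μ) (s : Finset ℕ) :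
    ∫ ω, ∏ i ∈ s, X i ω ∂μ = ∏ i ∈ s, ∫ ω, X i ω ∂μ := by
  classical
  induction s using Finset.cons_induction with
  | empty => simp
  | cons a s ha ih =>
    have hab : (∏ j ∈ s, X j) = fun ω => ∏ j ∈ s, X j ω := by
      funext ω; simp
    have hIdF : IndepFun (X a) (fun ω => ∏ i ∈ s, X i ω) μ := by
      have h := (hind.indepFun_finsetProd_of_notMem hXm ha).symm
      rwa [hab] at h
    have key := hIdF.integral_mul_eq_mul_integral (hXi a).aestronglyMeasurable
      (integrable_prod_of_indep hind hXm hXi s).aestronglyMeasurable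
    have key' : ∫ ω, X a ω * ∏ i ∈ s, X i ω ∂μ
        = (∫ ω, X a ω ∂μ) * ∫ ω, ∏ i ∈ s, X i ω ∂μ := by
      have heq : (fun ω => X a ω * ∏ i ∈ s, X i ω)
          = (X a * fun ω => ∏ i ∈ s, X i ω) := by
        funext ω; simp only [Pi.mul_apply]
      rw [heq]; exact key
    calc ∫ ω, ∏ i ∈ Finset.cons a s ha, X i ω ∂μ
        = ∫ ω, X a ω * ∏ i ∈ s, X i ω ∂μ := by
          simp only [Finset.prod_cons]
      _ = (∫ ω, X a ω ∂μ) * ∫ ω, ∏ i ∈ s, X i ω ∂μ := key'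
      _ = ∏ i ∈ Finset.cons a s ha, ∫ ω, X i ω ∂μ := by rw [Finset.prod_cons, ih]

end ProbAux

set_option maxHeartbeats 1600000 in
/-- Variance vanishing for i.i.d. majority voting: for i.i.d. accuracies in `[0,1]` with
mean `μ ≠ 1/2` and variance `σ²` such that `μ(1−μ) − σ² > 0` and `σ² + μ² ≠ 1/2`,
`Var(q_ℓ) → 0` as `ℓ → ∞`. -/
theorem variance_majAcc_tendsto_zero {Ω : Type*} [MeasurableSpace Ω] (μ : Measure Ω)
    [IsProbabilityMeasure μ] (p : ℕ → Ω → ℝ) (hmeas : ∀ i, Measurable (p i))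
    (hindep : iIndepFun p μ)
    (hident : ∀ i, IdentDistrib (p i) (p 0) μ μ)
    (hbdd : ∀ i, ∀ ω, p i ω ∈ Set.Icc (0 : ℝ) 1)
    (m σ2 : ℝ) (hm : m = ∫ ω, p 0 ω ∂μ) (hσ : σ2 = variance (p 0) μ)
    (hm' : m ≠ 1/2) (hpos : 0 < m * (1 - m) - σ2) (hsT : σ2 + m ^ 2 ≠ 1/2) :
    Tendsto (fun ℓ : ℕ => variance (fun ω => majAcc (Finset.range ℓ) (fun i => p i ω)) μ)
      atTop (nhds 0) := by
  classical
  -- integrability helper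
  have int_of_bd : ∀ {g : Ω → ℝ}, Measurable g → (∀ ω, |g ω| ≤ 1) → Integrable g μ := by
    intro g hg hb
    exact (integrable_const (1:ℝ)).mono' hg.aestronglyMeasurable
      (Filter.Eventually.of_forall fun ω => by
        rw [Real.norm_eq_abs]; simpa using hb ω)
  have hInt : ∀ i, Integrable (p i) μ := fun i =>
    int_of_bd (hmeas i) (fun ω => by
      have h := hbdd i ω; rw [abs_le]; exact ⟨by linarith [h.1], h.2⟩)
  have hm0 : 0 ≤ m := by
    rw [hm]; exact integral_nonneg fun ω => (hbdd 0 ω).1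
  have hm1 : m ≤ 1 := by
    rw [hm]
    calc ∫ ω, p 0 ω ∂μ ≤ ∫ _ω, (1:ℝ) ∂μ :=
          integral_mono (hInt 0) (integrable_const 1) fun ω => (hbdd 0 ω).2
      _ = 1 := by simp
  have hmean : ∀ i, ∫ ω, p i ω ∂μ = m := fun i => by
    rw [hm]; exact (hident i).integral_eq
  -- the ensemble accuracy as a function of ω
  set f : ℕ → Ω → ℝ := fun ℓ ω => majAcc (Finset.range ℓ) (fun i => p i ω) with hfdef
  -- term nonnegativity/boundedness
  have hterm01 : ∀ (L I : Finset ℕ) (ω : Ω),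
      (∏ i ∈ I, p i ω) * ∏ j ∈ L \ I, (1 - p j ω) ∈ Set.Icc (0:ℝ) 1 := by
    intro L I ω
    constructor
    · exact mul_nonneg (Finset.prod_nonneg fun i _ => (hbdd i ω).1)
        (Finset.prod_nonneg fun j _ => by linarith [(hbdd j ω).2])
    · have h1 : (∏ i ∈ I, p i ω) ≤ 1 :=
        Finset.prod_le_one (fun i _ => (hbdd i ω).1) (fun i _ => (hbdd i ω).2)
      have h2 : (∏ j ∈ L \ I, (1 - p j ω)) ≤ 1 :=
        Finset.prod_le_one (fun j _ => by linarith [(hbdd j ω).2])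
          (fun j _ => by linarith [(hbdd j ω).1])
      have h3 : 0 ≤ ∏ i ∈ I, p i ω := Finset.prod_nonneg fun i _ => (hbdd i ω).1
      have h4 : 0 ≤ ∏ j ∈ L \ I, (1 - p j ω) :=
        Finset.prod_nonneg fun j _ => by linarith [(hbdd j ω).2]
      calc (∏ i ∈ I, p i ω) * ∏ j ∈ L \ I, (1 - p j ω) ≤ 1 * 1 :=
            mul_le_mul h1 h2 h4 (by norm_num)
        _ = 1 := by norm_num
  have hfmeas : ∀ ℓ, Measurable (f ℓ) := by
    intro ℓ
    apply Finset.measurable_sum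
    intro k _
    apply Finset.measurable_sum
    intro I _
    exact (Finset.measurable_prod _ fun i _ => hmeas i).mul
      (Finset.measurable_prod _ fun j _ => measurable_const.sub (hmeas j))
  have hf0 : ∀ ℓ ω, 0 ≤ f ℓ ω := by
    intro ℓ ω
    apply Finset.sum_nonneg; intro k _
    apply Finset.sum_nonneg; intro I _
    exact (hterm01 (Finset.range ℓ) I ω).1
  have hf1 : ∀ ℓ ω, f ℓ ω ≤ 1 := by
    intro ℓ ω
    have htot : ∑ I ∈ (Finset.range ℓ).powerset,
        (∏ i ∈ I, p i ω) * ∏ j ∈ Finset.range ℓ \ I, (1 - p j ω) = 1 := by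
      rw [← Finset.prod_add]
      simp
    rw [Finset.powerset_card_biUnion, Finset.sum_biUnion
      (fun i _ j _ hij => Finset.pairwise_disjoint_powersetCard _ hij)] at htot
    calc f ℓ ω ≤ ∑ k ∈ Finset.range ((Finset.range ℓ).card + 1),
          ∑ I ∈ Finset.powersetCard k (Finset.range ℓ),
            (∏ i ∈ I, p i ω) * ∏ j ∈ Finset.range ℓ \ I, (1 - p j ω) := by
          apply Finset.sum_le_sum_of_subset_of_nonneg
          · intro k hk
            simp only [Finset.mem_Icc] at hk
            simp only [Finset.mem_range]
            omega
          · intro k _ _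
            apply Finset.sum_nonneg; intro I _
            exact (hterm01 (Finset.range ℓ) I ω).1
      _ = 1 := htot
  have hTmeas : ∀ (I : Finset ℕ) (L : Finset ℕ),
      Measurable (fun ω => (∏ i ∈ I, p i ω) * ∏ j ∈ L \ I, (1 - p j ω)) := by
    intro I L
    exact (Finset.measurable_prod _ fun i _ => hmeas i).mul
      (Finset.measurable_prod _ fun j _ => measurable_const.sub (hmeas j))
  have hTint : ∀ (I L : Finset ℕ),
      Integrable (fun ω => (∏ i ∈ I, p i ω) * ∏ j ∈ L \ I, (1 - p j ω)) μ := by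
    intro I L
    exact int_of_bd (hTmeas I L) (fun ω => by
      have h := hterm01 L I ω
      rw [abs_le]; exact ⟨by linarith [h.1], h.2⟩)
  have hfint : ∀ ℓ, Integrable (f ℓ) μ := fun ℓ =>
    int_of_bd (hfmeas ℓ) (fun ω => by
      rw [abs_le]; exact ⟨by linarith [hf0 ℓ ω], hf1 ℓ ω⟩)
  have hfmem : ∀ ℓ, MemLp (f ℓ) 2 μ := fun ℓ =>
    MemLp.of_bound (hfmeas ℓ).aestronglyMeasurable 1
      (Filter.Eventually.of_forall fun ω => by
        rw [Real.norm_eq_abs, abs_le]; exact ⟨by linarith [hf0 ℓ ω], hf1 ℓ ω⟩)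
  -- integral of a single term
  have hterm_int : ∀ (L I : Finset ℕ), I ⊆ L →
      ∫ ω, (∏ i ∈ I, p i ω) * ∏ j ∈ L \ I, (1 - p j ω) ∂μ
        = m ^ I.card * (1-m) ^ (L \ I).card := by
    intro L I hI
    set Y : ℕ → Ω → ℝ := fun i ω => if i ∈ I then p i ω else 1 - p i ω with hY
    have hYmeas : ∀ i, Measurable (Y i) := by
      intro i
      by_cases h : i ∈ I
      · simpa [hY, h] using hmeas i
      · have hh : Measurable fun ω => 1 - p i ω := measurable_const.sub (hmeas i)
        simpa [hY, h] using hh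
    have hYind : iIndepFun Y μ := by
      have h := hindep.comp (fun i (x:ℝ) => if i ∈ I then x else 1 - x)
        (fun i => by
          by_cases h : i ∈ I
          · have hh : Measurable fun x : ℝ => x := measurable_id
            simpa [h] using hh
          · have hh : Measurable fun x : ℝ => 1 - x := measurable_const.sub measurable_id
            simpa [h] using hh)
      have hYeq : Y = fun i => (fun x : ℝ => if i ∈ I then x else 1 - x) ∘ p i := by
        funext i ω
        by_cases hi : i ∈ I <;> simp [hY, hi]
      rw [hYeq]
      exact h
    have hYint : ∀ i, Integrable (Y i) μ := by
      intro i
      by_cases h : i ∈ I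
      · simpa [hY, h] using hInt i
      · have hh : Integrable (fun ω => 1 - p i ω) μ := (integrable_const (1:ℝ)).sub (hInt i)
        simpa [hY, h] using hh
    have hprod : ∀ ω, (∏ i ∈ I, p i ω) * ∏ j ∈ L \ I, (1 - p j ω) = ∏ i ∈ L, Y i ω := by
      intro ω
      have hsplitL : ∏ i ∈ L, Y i ω = (∏ i ∈ I, Y i ω) * ∏ j ∈ L \ I, Y j ω := by
        rw [← Finset.prod_union Finset.disjoint_sdiff, Finset.union_sdiff_of_subset hI]
      rw [hsplitL]
      congr 1
      · exact Finset.prod_congr rfl fun i hi => by simp [hY, hi]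
      · exact Finset.prod_congr rfl fun j hj => by
          simp [hY, (Finset.mem_sdiff.mp hj).2]
    have hYmean : ∀ i ∈ L, ∫ ω, Y i ω ∂μ = if i ∈ I then m else 1 - m := by
      intro i _
      by_cases h : i ∈ I
      · simp only [hY, h, if_true]
        exact hmean i
      · simp only [hY, h, if_false]
        rw [integral_sub (integrable_const 1) (hInt i), hmean i]
        simp
    calc ∫ ω, (∏ i ∈ I, p i ω) * ∏ j ∈ L \ I, (1 - p j ω) ∂μ
        = ∫ ω, ∏ i ∈ L, Y i ω ∂μ := by
          congr 1; funext ω; exact hprod ω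
      _ = ∏ i ∈ L, ∫ ω, Y i ω ∂μ := integral_prod_of_indep hYind hYmeas hYint L
      _ = ∏ i ∈ L, (if i ∈ I then m else 1 - m) := Finset.prod_congr rfl hYmean
      _ = (∏ _i ∈ I, m) * ∏ _j ∈ L \ I, (1-m) := by
          rw [Finset.prod_congr (Finset.union_sdiff_of_subset hI).symm (fun _ _ => rfl),
            Finset.prod_union Finset.disjoint_sdiff]
          congr 1
          · exact Finset.prod_congr rfl fun i hi => if_pos hi
          · exact Finset.prod_congr rfl fun j hj => if_neg (Finset.mem_sdiff.mp hj).2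
      _ = m ^ I.card * (1-m) ^ (L \ I).card := by
          rw [Finset.prod_const, Finset.prod_const]
  -- expectation of f ℓ
  have hEf : ∀ ℓ, ∫ ω, f ℓ ω ∂μ
      = ∑ k ∈ Finset.Icc (ℓ/2+1) ℓ, m ^ k * (1-m) ^ (ℓ-k) * (ℓ.choose k : ℝ) := by
    intro ℓ
    have h1 : ∫ ω, f ℓ ω ∂μ = ∑ k ∈ Finset.Icc (ℓ/2+1) ℓ,
        ∑ I ∈ Finset.powersetCard k (Finset.range ℓ),
          ∫ ω, (∏ i ∈ I, p i ω) * ∏ j ∈ Finset.range ℓ \ I, (1 - p j ω) ∂μ := by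
      calc ∫ ω, f ℓ ω ∂μ
          = ∫ ω, ∑ k ∈ Finset.Icc (ℓ/2+1) ℓ,
              ∑ I ∈ Finset.powersetCard k (Finset.range ℓ),
                (∏ i ∈ I, p i ω) * ∏ j ∈ Finset.range ℓ \ I, (1 - p j ω) ∂μ := by
            congr 1
            funext ω
            simp only [hfdef, majAcc, Finset.card_range]
        _ = ∑ k ∈ Finset.Icc (ℓ/2+1) ℓ,
              ∫ ω, ∑ I ∈ Finset.powersetCard k (Finset.range ℓ),
                (∏ i ∈ I, p i ω) * ∏ j ∈ Finset.range ℓ \ I, (1 - p j ω) ∂μ :=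
            integral_finset_sum _ (fun k _ =>
              integrable_finset_sum _ (fun I _ => hTint I (Finset.range ℓ)))
        _ = ∑ k ∈ Finset.Icc (ℓ/2+1) ℓ,
              ∑ I ∈ Finset.powersetCard k (Finset.range ℓ),
                ∫ ω, (∏ i ∈ I, p i ω) * ∏ j ∈ Finset.range ℓ \ I, (1 - p j ω) ∂μ :=
            Finset.sum_congr rfl fun k _ =>
              integral_finset_sum _ (fun I _ => hTint I (Finset.range ℓ))
    rw [h1]
    refine Finset.sum_congr rfl fun k hk => ?_
    rw [Finset.mem_Icc] at hk
    have hsum : ∀ I ∈ Finset.powersetCard k (Finset.range ℓ),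
        ∫ ω, (∏ i ∈ I, p i ω) * ∏ j ∈ Finset.range ℓ \ I, (1 - p j ω) ∂μ
          = m ^ k * (1-m) ^ (ℓ-k) := by
      intro I hI
      rw [Finset.mem_powersetCard] at hI
      rw [hterm_int (Finset.range ℓ) I hI.1, hI.2,
        Finset.card_sdiff_of_subset hI.1, Finset.card_range, hI.2]
    rw [Finset.sum_congr rfl hsum, Finset.sum_const, Finset.card_powersetCard,
      Finset.card_range, nsmul_eq_mul]
    ring
  -- variance bound against an arbitrary constant
  have hvar_le : ∀ (c : ℝ) (ℓ : ℕ), variance (f ℓ) μ ≤ ∫ ω, (f ℓ ω - c)^2 ∂μ := by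
    intro c ℓ
    rw [variance_eq_sub (hfmem ℓ)]
    have hXi := hfint ℓ
    have hX2 : Integrable (fun ω => f ℓ ω ^ 2) μ := (hfmem ℓ).integrable_sq
    have expand : ∫ ω, (f ℓ ω - c)^2 ∂μ
        = (∫ ω, f ℓ ω ^ 2 ∂μ) - 2*c*(∫ ω, f ℓ ω ∂μ) + c^2 := by
      have heq : (fun ω => (f ℓ ω - c)^2)
          = fun ω => (f ℓ ω ^ 2 - (2*c) * f ℓ ω) + c^2 := by
        funext ω; ring
      have e1 : Integrable (fun ω => f ℓ ω ^ 2 - (2*c) * f ℓ ω) μ :=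
        hX2.sub (hXi.const_mul (2*c))
      have e2 : Integrable (fun ω => (2*c) * f ℓ ω) μ := hXi.const_mul (2*c)
      rw [heq, integral_add e1 (integrable_const _), integral_sub hX2 e2,
        integral_const_mul, integral_const]
      simp only [measure_univ, ENNReal.toReal_one, smul_eq_mul, one_mul, probReal_univ]
    rw [expand]
    have hsq := sq_nonneg ((∫ ω, f ℓ ω ∂μ) - c)
    simp only [Pi.pow_apply]
    nlinarith [hsq]
  -- the uniform bound  Var(f ℓ) ≤ c0 / ℓ  for ℓ ≥ 1
  set c0 : ℝ := m * (1-m) / (m - 1/2)^2 with hc0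
  have hbound2 : ∀ ℓ : ℕ, 1 ≤ ℓ → variance (f ℓ) μ ≤ c0 / ℓ := by
    intro ℓ hℓ
    have hℓR : (1:ℝ) ≤ (ℓ:ℝ) := by exact_mod_cast hℓ
    -- facts about nat division
    have hdiv1 : ((ℓ/2 : ℕ) : ℝ) ≤ (ℓ:ℝ)/2 := by
      have h := Nat.div_mul_le_self ℓ 2
      have : ((ℓ/2 : ℕ) : ℝ) * 2 ≤ (ℓ:ℝ) := by exact_mod_cast h
      linarith
    have hdiv2 : (ℓ:ℝ) ≤ 2*((ℓ/2 : ℕ) : ℝ) + 1 := by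
      have h : ℓ ≤ 2*(ℓ/2) + 1 := by omega
      exact_mod_cast h
    rcases lt_or_gt_of_ne hm' with hlt | hgt
    · -- m < 1/2 : use Var ≤ E[f²] ≤ E[f] = upper tail
      have h1 : variance (f ℓ) μ ≤ ∫ ω, (f ℓ ω - 0)^2 ∂μ := hvar_le 0 ℓ
      have h2 : ∫ ω, (f ℓ ω - 0)^2 ∂μ ≤ ∫ ω, f ℓ ω ∂μ := by
        apply integral_mono _ (hfint ℓ)
        · intro ω
          have h0 := hf0 ℓ ω; have h1' := hf1 ℓ ω
          simp only [sub_zero]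
          nlinarith
        · refine int_of_bd ?_ ?_
          · exact ((hfmeas ℓ).sub measurable_const).pow_const 2
          · intro ω
            have h0 := hf0 ℓ ω; have h1' := hf1 ℓ ω
            rw [abs_le]; constructor <;> nlinarith
      have h3 : ∫ ω, f ℓ ω ∂μ ≤ c0 / ℓ := by
        rw [hEf ℓ, hc0]
        apply chebyshev_aux hm0 hm1 hm' hℓ
        · intro k hk
          rw [Finset.mem_Icc] at hk
          rw [Finset.mem_range]
          omega
        · intro k hk
          rw [Finset.mem_Icc] at hk
          have hk1 : ((ℓ/2 : ℕ) : ℝ) + 1 ≤ (k:ℝ) := by exact_mod_cast hk.1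
          have hkhalf : (ℓ:ℝ)/2 ≤ (k:ℝ) := by linarith
          have hA : 0 ≤ (k:ℝ) - (ℓ:ℝ)/2 := by linarith
          have hB : 0 ≤ (k:ℝ) - 2*(ℓ:ℝ)*m + (ℓ:ℝ)/2 := by nlinarith
          nlinarith [mul_nonneg hA hB]
      linarith
    · -- m > 1/2 : use Var ≤ E[(f-1)²] ≤ E[1-f] = lower tail
      have h1 : variance (f ℓ) μ ≤ ∫ ω, (f ℓ ω - 1)^2 ∂μ := hvar_le 1 ℓ
      have hint1 : Integrable (fun ω => (f ℓ ω - 1)^2) μ := by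
        refine int_of_bd ?_ ?_
        · exact ((hfmeas ℓ).sub measurable_const).pow_const 2
        · intro ω
          have h0 := hf0 ℓ ω; have h1' := hf1 ℓ ω
          rw [abs_le]; constructor <;> nlinarith
      have h2 : ∫ ω, (f ℓ ω - 1)^2 ∂μ ≤ ∫ ω, (1 - f ℓ ω) ∂μ := by
        have hint2 : Integrable (fun ω => 1 - f ℓ ω) μ := (integrable_const 1).sub (hfint ℓ)
        apply integral_mono hint1 hint2
        intro ω
        have h0 := hf0 ℓ ω; have h1' := hf1 ℓ ω
        show (f ℓ ω - 1)^2 ≤ 1 - f ℓ ω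
        nlinarith [mul_nonneg h0 (by linarith : (0:ℝ) ≤ 1 - f ℓ ω)]
      have h3 : ∫ ω, (1 - f ℓ ω) ∂μ = 1 - ∫ ω, f ℓ ω ∂μ := by
        rw [integral_sub (integrable_const 1) (hfint ℓ)]
        simp
      have hsplit : (∑ k ∈ range (ℓ/2+1), m ^ k * (1-m) ^ (ℓ-k) * (ℓ.choose k : ℝ))
          + ∑ k ∈ Finset.Icc (ℓ/2+1) ℓ, m ^ k * (1-m) ^ (ℓ-k) * (ℓ.choose k : ℝ)
          = ∑ k ∈ range (ℓ+1), m ^ k * (1-m) ^ (ℓ-k) * (ℓ.choose k : ℝ) := by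
        rw [Finset.range_eq_Ico, Finset.range_eq_Ico, ← Finset.Ico_add_one_right_eq_Icc]
        exact Finset.sum_Ico_consecutive _ (Nat.zero_le (ℓ/2+1)) (by omega : ℓ/2+1 ≤ ℓ+1)
      have h4 : 1 - ∫ ω, f ℓ ω ∂μ
          = ∑ k ∈ range (ℓ/2+1), m ^ k * (1-m) ^ (ℓ-k) * (ℓ.choose k : ℝ) := by
        rw [hEf ℓ]
        have := bsum0 m ℓ
        linarith [hsplit]
      have h5 : (∑ k ∈ range (ℓ/2+1), m ^ k * (1-m) ^ (ℓ-k) * (ℓ.choose k : ℝ)) ≤ c0 / ℓ := by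
        rw [hc0]
        apply chebyshev_aux hm0 hm1 hm' hℓ
        · intro k hk
          rw [Finset.mem_range] at hk ⊢
          omega
        · intro k hk
          rw [Finset.mem_range] at hk
          have hk1 : (k:ℝ) ≤ ((ℓ/2 : ℕ) : ℝ) := by
            have : k ≤ ℓ/2 := by omega
            exact_mod_cast this
          have hA : 0 ≤ (ℓ:ℝ)/2 - (k:ℝ) := by linarith
          have hB : 0 ≤ 2*(ℓ:ℝ)*m - (ℓ:ℝ)/2 - (k:ℝ) := by nlinarith
          nlinarith [mul_nonneg hA hB]
      linarith
  -- conclude by squeezing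
  have hc0top : Tendsto (fun ℓ : ℕ => c0 / (ℓ:ℝ)) atTop (nhds 0) :=
    tendsto_const_div_atTop_nhds_zero_nat c0
  apply tendsto_of_tendsto_of_tendsto_of_le_of_le' tendsto_const_nhds hc0top
  · exact Filter.Eventually.of_forall fun ℓ => variance_nonneg _ _
  · filter_upwards [eventually_ge_atTop 1] with ℓ hℓ using hbound2 ℓ hℓ
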